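/- Each cluster pre-variable x_k (k ∈ ℤ) is a Laurent polynomial in x₁ and x₂ with coefficients in k[p_{1,1},…,p_{1,ℓ₁}, p_{1,ℓ₁}^{-1}, p_{2,1},…,p_{2,ℓ₂}, p_{2,ℓ₂}^{-1}]; that is, x_k lies in the subring k[p_{1,1},…,p_{1,ℓ₁}, p_{1,ℓ₁}^{-1}, p_{2,1},…,p_{2,ℓ₂}, p_{2,ℓ₂}^{-1}][x₁^{±1}, x₂^{±1}] of the rational function field. -/

import Mathlib

attribute [local instance] Classical.propDecidable

noncomputable section

namespace GCA

/-- The variables: `Sum.inl (i, j)` is the coefficient indeterminate `p_{i+1,j}` (only those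
with `1 ≤ j ≤ ℓ_{i+1}` are used), and `Sum.inr i` is the cluster variable `x_{i+1}`. -/
abbrev Vars := (Fin 2 × ℕ) ⊕ Fin 2

/-- The ambient rational function field `k(p_{1,1},…,p_{2,ℓ₂})(x₁,x₂)`. -/
abbrev FF (K : Type) [Field K] := FractionRing (MvPolynomial Vars K)

variable (K : Type) [Field K]

/-- The image in `FF K` of a polynomial variable. -/
def ev (v : Vars) : FF K := algebraMap (MvPolynomial Vars K) (FF K) (MvPolynomial.X v)

/-- The coefficient indeterminate `p_{i+1,j}` (for `i : Fin 2`, `j ≥ 1`). -/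
def p (i : Fin 2) (j : ℕ) : FF K := ev K (.inl (i, j))

/-- The initial cluster variable `x₁`. -/
def x1 : FF K := ev K (.inr 0)

/-- The initial cluster variable `x₂`. -/
def x2 : FF K := ev K (.inr 1)

/-- The image of the ground field `k` in `FF K`. -/
def KImage : Set (FF K) :=
  Set.range fun c : K => algebraMap (MvPolynomial Vars K) (FF K) (MvPolynomial.C c)

/-- The set of coefficient indeterminates `p_{1,1},…,p_{1,ℓ₁},p_{2,1},…,p_{2,ℓ₂}`. -/
def pGens (ℓ₁ ℓ₂ : ℕ) : Set (FF K) :=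
  (fun j => p K 0 j) '' Set.Icc 1 ℓ₁ ∪ (fun j => p K 1 j) '' Set.Icc 1 ℓ₂

variable (ℓ₁ ℓ₂ : ℕ)

/-- The exchange polynomial `P₁(z) = 1 + p_{1,1}z + ⋯ + p_{1,ℓ₁}z^{ℓ₁}`. -/
def P1 (z : FF K) : FF K := 1 + ∑ j ∈ Finset.Icc 1 ℓ₁, p K 0 j * z ^ j

/-- The exchange polynomial `P₂(z) = 1 + p_{2,1}z + ⋯ + p_{2,ℓ₂}z^{ℓ₂}`. -/
def P2 (z : FF K) : FF K := 1 + ∑ j ∈ Finset.Icc 1 ℓ₂, p K 1 j * z ^ j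

/-- `P̄₁(z) = p_{1,ℓ₁}^{-1}·z^{ℓ₁}·P₁(z^{-1})`. -/
def P1bar (z : FF K) : FF K := (p K 0 ℓ₁)⁻¹ * z ^ ℓ₁ * P1 K ℓ₁ z⁻¹

/-- `P̄₂(z) = p_{2,ℓ₂}^{-1}·z^{ℓ₂}·P₂(z^{-1})`. -/
def P2bar (z : FF K) : FF K := (p K 1 ℓ₂)⁻¹ * z ^ ℓ₂ * P2 K ℓ₂ z⁻¹

/-- `x : ℤ → FF K` is the family of cluster pre-variables: `x 1 = x₁`, `x 2 = x₂`, and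
`x_{k+1}·x_{k−1} = P₁(x_k), P₂(x_k), P̄₁(x_k), P̄₂(x_k)` according as
`k ≡ 1, 2, 3, 0 (mod 4)`. -/
def IsPreVarSeq (x : ℤ → FF K) : Prop :=
  x 1 = x1 K ∧ x 2 = x2 K ∧ ∀ k : ℤ,
    x (k + 1) * x (k - 1) =
      if k % 4 = 1 then P1 K ℓ₁ (x k)
      else if k % 4 = 2 then P2 K ℓ₂ (x k)
      else if k % 4 = 3 then P1bar K ℓ₁ (x k)
      else P2bar K ℓ₂ (x k)

/-- The coefficient ring `k[p_{1,1},…,p_{1,ℓ₁},p_{1,ℓ₁}^{-1},p_{2,1},…,p_{2,ℓ₂},p_{2,ℓ₂}^{-1}]`,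
as a subring of `FF K`. -/
def CoeffRing : Subring (FF K) :=
  Subring.closure (KImage K ∪ pGens K ℓ₁ ℓ₂ ∪ {(p K 0 ℓ₁)⁻¹, (p K 1 ℓ₂)⁻¹})

/-- The Laurent polynomial ring
`k[p_{1,1},…,p_{1,ℓ₁},p_{1,ℓ₁}^{-1},p_{2,1},…,p_{2,ℓ₂},p_{2,ℓ₂}^{-1}][x₁^{±1},x₂^{±1}]`,
as a subring of `FF K`. -/
def LaurentRing : Subring (FF K) :=
  Subring.closure (KImage K ∪ pGens K ℓ₁ ℓ₂ ∪
    {(p K 0 ℓ₁)⁻¹, (p K 1 ℓ₂)⁻¹, x1 K, (x1 K)⁻¹, x2 K, (x2 K)⁻¹})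

end GCA

namespace GCA

section Positivity

variable (K : Type) [Field K]
abbrev AA := MvPolynomial Vars K

def ι : AA K →+* FF K := algebraMap (AA K) (FF K)

lemma ι_inj : Function.Injective (ι K) := IsFractionRing.injective (AA K) (FF K)

variable [CharZero K]

def TSet : Set (AA K) := {f | f ≠ 0 ∧ ∀ m, ∃ q : ℚ, 0 ≤ q ∧ f.coeff m = (q : K)}

def Pos : Set (FF K) := {y | ∃ f ∈ TSet K, ∃ g ∈ TSet K, y = ι K f / ι K g}

variable {K}

lemma TSet.one_mem : (1 : AA K) ∈ TSet K := by
  constructor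
  · exact one_ne_zero
  · intro m
    by_cases h : m = 0
    · exact ⟨1, by norm_num, by simp [h]⟩
    · refine ⟨0, le_rfl, ?_⟩
      simp [MvPolynomial.coeff_one, h, Ne.symm h]

lemma TSet.X_mem (v : Vars) : (MvPolynomial.X v : AA K) ∈ TSet K := by
  constructor
  · exact MvPolynomial.X_ne_zero v
  · intro m
    by_cases h : m = Finsupp.single v 1
    · exact ⟨1, by norm_num, by simp [h, MvPolynomial.coeff_X']⟩
    · refine ⟨0, le_rfl, ?_⟩
      simp [MvPolynomial.coeff_X', Ne.symm h]

lemma TSet.mul_mem {f g : AA K} (hf : f ∈ TSet K) (hg : g ∈ TSet K) : f * g ∈ TSet K := by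
  refine ⟨mul_ne_zero hf.1 hg.1, ?_⟩
  intro m
  classical
  rw [MvPolynomial.coeff_mul]
  have : ∀ x ∈ Finset.HasAntidiagonal.antidiagonal m, ∃ q : ℚ, 0 ≤ q ∧
      f.coeff x.1 * g.coeff x.2 = (q : K) := by
    intro x _
    obtain ⟨q1, hq1, e1⟩ := hf.2 x.1
    obtain ⟨q2, hq2, e2⟩ := hg.2 x.2
    exact ⟨q1 * q2, mul_nonneg hq1 hq2, by push_cast [e1, e2]; ring⟩
  choose q hq he using this
  refine ⟨∑ x ∈ (Finset.HasAntidiagonal.antidiagonal m).attach, q x.1 x.2, ?_, ?_⟩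
  · exact Finset.sum_nonneg fun x _ => hq x.1 x.2
  · rw [← Finset.sum_attach (Finset.HasAntidiagonal.antidiagonal m)
      (fun x => f.coeff x.1 * g.coeff x.2)]
    push_cast
    exact Finset.sum_congr rfl fun x _ => he x.1 x.2

lemma TSet.add_mem {f g : AA K} (hf : f ∈ TSet K) (hg : g ∈ TSet K) : f + g ∈ TSet K := by
  have coeffs : ∀ m, ∃ q : ℚ, 0 ≤ q ∧ (f + g).coeff m = (q : K) := by
    intro m
    obtain ⟨q1, hq1, e1⟩ := hf.2 m
    obtain ⟨q2, hq2, e2⟩ := hg.2 m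
    exact ⟨q1 + q2, by positivity, by push_cast [MvPolynomial.coeff_add, e1, e2]; ring⟩
  refine ⟨?_, coeffs⟩
  -- nonzero: pick a monomial in the support of f
  intro h0
  obtain ⟨m, hm⟩ := MvPolynomial.ne_zero_iff.1 hf.1
  obtain ⟨q1, hq1, e1⟩ := hf.2 m
  obtain ⟨q2, hq2, e2⟩ := hg.2 m
  have : (f + g).coeff m = 0 := by rw [h0]; simp
  rw [MvPolynomial.coeff_add, e1, e2] at this
  have hq12 : q1 + q2 = 0 := by exact_mod_cast this
  have : q1 = 0 := by linarith
  exact hm (by rw [e1, this]; simp)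

lemma Pos.ne_zero {y : FF K} (hy : y ∈ Pos K) : y ≠ 0 := by
  obtain ⟨f, hf, g, hg, rfl⟩ := hy
  have hfne : ι K f ≠ 0 := fun h => hf.1 (ι_inj K (by simpa using h))
  have hgne : ι K g ≠ 0 := fun h => hg.1 (ι_inj K (by simpa using h))
  exact div_ne_zero hfne hgne

lemma Pos.mul_mem {y z : FF K} (hy : y ∈ Pos K) (hz : z ∈ Pos K) : y * z ∈ Pos K := by
  obtain ⟨f, hf, g, hg, rfl⟩ := hy
  obtain ⟨f', hf', g', hg', rfl⟩ := hz
  exact ⟨f * f', TSet.mul_mem hf hf', g * g', TSet.mul_mem hg hg', by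
    rw [RingHom.map_mul, RingHom.map_mul, div_mul_div_comm]⟩

lemma Pos.add_mem {y z : FF K} (hy : y ∈ Pos K) (hz : z ∈ Pos K) : y + z ∈ Pos K := by
  obtain ⟨f, hf, g, hg, rfl⟩ := hy
  obtain ⟨f', hf', g', hg', rfl⟩ := hz
  have hgne : ι K g ≠ 0 := fun h => hg.1 (ι_inj K (by simpa using h))
  have hgne' : ι K g' ≠ 0 := fun h => hg'.1 (ι_inj K (by simpa using h))
  refine ⟨f * g' + f' * g, TSet.add_mem (TSet.mul_mem hf hg') (TSet.mul_mem hf' hg),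
    g * g', TSet.mul_mem hg hg', ?_⟩
  rw [RingHom.map_add, RingHom.map_mul, RingHom.map_mul, RingHom.map_mul,
    div_add_div _ _ hgne hgne']
  ring_nf

lemma Pos.inv_mem {y : FF K} (hy : y ∈ Pos K) : y⁻¹ ∈ Pos K := by
  obtain ⟨f, hf, g, hg, rfl⟩ := hy
  exact ⟨g, hg, f, hf, by rw [inv_div]⟩

lemma Pos.one_mem : (1 : FF K) ∈ Pos K :=
  ⟨1, TSet.one_mem, 1, TSet.one_mem, by simp⟩

lemma Pos.ev_mem (v : Vars) : ev K v ∈ Pos K :=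
  ⟨MvPolynomial.X v, TSet.X_mem v, 1, TSet.one_mem, by simp [ev, ι]⟩

lemma Pos.pow_mem {y : FF K} (hy : y ∈ Pos K) (n : ℕ) : y ^ n ∈ Pos K := by
  induction n with
  | zero => simpa using Pos.one_mem
  | succ n ih => rw [pow_succ]; exact Pos.mul_mem ih hy

lemma Pos.one_add_sum_mem {s : Finset ℕ} {f : ℕ → FF K}
    (hf : ∀ i ∈ s, f i ∈ Pos K) : 1 + ∑ i ∈ s, f i ∈ Pos K := by
  classical
  induction s using Finset.induction_on with
  | empty => simpa using Pos.one_mem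
  | @insert a s hnotmem ih =>
    rw [Finset.sum_insert hnotmem, ← add_assoc, add_comm 1 (f a), add_assoc]
    exact Pos.add_mem (hf a (by simp)) (ih fun i hi => hf i (by simp [hi]))

end Positivity

section PosSeq

variable {K : Type} [Field K] [CharZero K] {ℓ₁ ℓ₂ : ℕ}

lemma P1_pos {z : FF K} (hz : z ∈ Pos K) : P1 K ℓ₁ z ∈ Pos K :=
  Pos.one_add_sum_mem fun j _ => Pos.mul_mem (Pos.ev_mem _) (Pos.pow_mem hz j)

lemma P2_pos {z : FF K} (hz : z ∈ Pos K) : P2 K ℓ₂ z ∈ Pos K :=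
  Pos.one_add_sum_mem fun j _ => Pos.mul_mem (Pos.ev_mem _) (Pos.pow_mem hz j)

lemma P1bar_pos {z : FF K} (hz : z ∈ Pos K) : P1bar K ℓ₁ z ∈ Pos K :=
  Pos.mul_mem (Pos.mul_mem (Pos.inv_mem (Pos.ev_mem _)) (Pos.pow_mem hz ℓ₁))
    (P1_pos (Pos.inv_mem hz))

lemma P2bar_pos {z : FF K} (hz : z ∈ Pos K) : P2bar K ℓ₂ z ∈ Pos K :=
  Pos.mul_mem (Pos.mul_mem (Pos.inv_mem (Pos.ev_mem _)) (Pos.pow_mem hz ℓ₂))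
    (P2_pos (Pos.inv_mem hz))

lemma seq_mem_pos {x : ℤ → FF K} (hx : IsPreVarSeq K ℓ₁ ℓ₂ x) : ∀ k : ℤ, x k ∈ Pos K := by
  obtain ⟨h1, h2, hrel⟩ := hx
  have rhsP : ∀ k : ℤ, x k ∈ Pos K →
      (if k % 4 = 1 then P1 K ℓ₁ (x k)
      else if k % 4 = 2 then P2 K ℓ₂ (x k)
      else if k % 4 = 3 then P1bar K ℓ₁ (x k)
      else P2bar K ℓ₂ (x k)) ∈ Pos K := by
    intro k hk
    split_ifs with h h h
    · exact P1_pos hk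
    · exact P2_pos hk
    · exact P1bar_pos hk
    · exact P2bar_pos hk
  have up : ∀ n : ℕ, x (1 + n) ∈ Pos K ∧ x (2 + n) ∈ Pos K := by
    intro n
    induction n with
    | zero =>
      constructor
      · simpa using h1 ▸ Pos.ev_mem (K := K) (.inr 0)
      · simpa using h2 ▸ Pos.ev_mem (K := K) (.inr 1)
    | succ n ih =>
      have e1 : (1 : ℤ) + (n + 1 : ℕ) = 2 + n := by push_cast; ring
      have e2 : (2 : ℤ) + (n + 1 : ℕ) = (2 + n) + 1 := by push_cast; ring
      refine ⟨by rw [e1]; exact ih.2, ?_⟩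
      rw [e2]
      have hne : x ((2 + n) - 1) ≠ 0 := by
        have : (2 + (n:ℤ)) - 1 = 1 + n := by ring
        rw [this]; exact Pos.ne_zero ih.1
      have heq := eq_div_of_mul_eq hne (hrel (2 + n))
      rw [heq, div_eq_mul_inv]
      refine Pos.mul_mem (rhsP _ ih.2) (Pos.inv_mem ?_)
      have : (2 + (n:ℤ)) - 1 = 1 + n := by ring
      rw [this]; exact ih.1
  have down : ∀ n : ℕ, x (2 - n) ∈ Pos K ∧ x (1 - n) ∈ Pos K := by
    intro n
    induction n with
    | zero =>
      constructor
      · simpa using h2 ▸ Pos.ev_mem (K := K) (.inr 1)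
      · simpa using h1 ▸ Pos.ev_mem (K := K) (.inr 0)
    | succ n ih =>
      have e1 : (2 : ℤ) - (n + 1 : ℕ) = 1 - n := by push_cast; ring
      have e2 : (1 : ℤ) - (n + 1 : ℕ) = (1 - n) - 1 := by push_cast; ring
      refine ⟨by rw [e1]; exact ih.2, ?_⟩
      rw [e2]
      have hne : x ((1 - n : ℤ) + 1) ≠ 0 := by
        have : (1 - (n:ℤ)) + 1 = 2 - n := by ring
        rw [this]; exact Pos.ne_zero ih.1
      have heq' : x ((1 - n : ℤ) - 1) * x ((1 - n : ℤ) + 1) =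
          (if (1 - n : ℤ) % 4 = 1 then P1 K ℓ₁ (x (1 - n))
          else if (1 - n : ℤ) % 4 = 2 then P2 K ℓ₂ (x (1 - n))
          else if (1 - n : ℤ) % 4 = 3 then P1bar K ℓ₁ (x (1 - n))
          else P2bar K ℓ₂ (x (1 - n))) := by
        rw [mul_comm]; exact hrel (1 - n)
      have heq := eq_div_of_mul_eq hne heq'
      rw [heq, div_eq_mul_inv]
      refine Pos.mul_mem (rhsP _ ih.2) (Pos.inv_mem ?_)
      have : (1 - (n:ℤ)) + 1 = 2 - n := by ring
      rw [this]; exact ih.1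
  intro k
  rcases le_or_gt 1 k with hk | hk
  · obtain ⟨n, rfl⟩ : ∃ n : ℕ, k = 1 + n := ⟨(k - 1).toNat, by omega⟩
    exact (up n).1
  · obtain ⟨n, rfl⟩ : ∃ n : ℕ, k = 1 - n := ⟨(1 - k).toNat, by omega⟩
    exact (down n).2

end PosSeq


section PolyTool

variable {K : Type} [Field K] {σ : Type}

open MvPolynomial in
lemma prime_XX (v : σ) : Prime (MvPolynomial.X v : MvPolynomial σ K) := by
  classical
  let e := (renameEquiv K (Equiv.optionSubtypeNe v).symm).trans
    (optionEquivLeft K {u // u ≠ v})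
  have he : e (X v) = Polynomial.X := by
    have : (Equiv.optionSubtypeNe v).symm v = none := Equiv.optionSubtypeNe_symm_self v
    simp [e, renameEquiv_apply, rename_X, this, optionEquivLeft_X_none]
  rw [← MulEquiv.prime_iff e.toMulEquiv (p := (X v : MvPolynomial σ K))]
  show Prime (e (X v))
  rw [he]
  exact Polynomial.prime_X

end PolyTool

section CoreDefs

variable (K : Type) [Field K] (ℓ₁ ℓ₂ : ℕ)

/-- The allowed variables. -/
def Ok : Vars → Prop
  | .inl ij => (1 ≤ ij.2 ∧ ij.2 ≤ (if ij.1 = 0 then ℓ₁ else ℓ₂)) ∨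
      (ij.1 = 0 ∧ ij.2 = ℓ₁) ∨ (ij.1 = 1 ∧ ij.2 = ℓ₂)
  | .inr _ => True

abbrev BB := MvPolynomial {v : Vars // Ok ℓ₁ ℓ₂ v} K

def φm : BB K ℓ₁ ℓ₂ →+* FF K :=
  (ι K).comp (MvPolynomial.rename (Subtype.val : {v // Ok ℓ₁ ℓ₂ v} → Vars)).toRingHom

lemma φm_inj : Function.Injective (φm K ℓ₁ ℓ₂) := by
  have h : ⇑(φm K ℓ₁ ℓ₂) = ⇑(ι K) ∘
      ⇑(MvPolynomial.rename (Subtype.val : {v // Ok ℓ₁ ℓ₂ v} → Vars)) := rfl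
  rw [h]
  exact (ι_inj K).comp (MvPolynomial.rename_injective _ Subtype.val_injective)

def sx1 : {v : Vars // Ok ℓ₁ ℓ₂ v} := ⟨.inr 0, trivial⟩
def sx2 : {v : Vars // Ok ℓ₁ ℓ₂ v} := ⟨.inr 1, trivial⟩
def sq1 : {v : Vars // Ok ℓ₁ ℓ₂ v} := ⟨.inl (0, ℓ₁), Or.inr (Or.inl ⟨rfl, rfl⟩)⟩
def sq2 : {v : Vars // Ok ℓ₁ ℓ₂ v} := ⟨.inl (1, ℓ₂), Or.inr (Or.inr ⟨rfl, rfl⟩)⟩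

def IsSpec (v : {v : Vars // Ok ℓ₁ ℓ₂ v}) : Prop :=
  v = sx1 ℓ₁ ℓ₂ ∨ v = sx2 ℓ₁ ℓ₂ ∨ v = sq1 ℓ₁ ℓ₂ ∨ v = sq2 ℓ₁ ℓ₂

def MonB : Submonoid (BB K ℓ₁ ℓ₂) :=
  Submonoid.closure {μ | ∃ v, IsSpec ℓ₁ ℓ₂ v ∧ μ = MvPolynomial.X v}

def NoMF (N : BB K ℓ₁ ℓ₂) : Prop :=
  ∀ v, IsSpec ℓ₁ ℓ₂ v → ¬ (MvPolynomial.X v ∣ N)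

def Cop (a b : BB K ℓ₁ ℓ₂) : Prop := ∀ π, Prime π → π ∣ a → π ∣ b → False

variable {K ℓ₁ ℓ₂}

lemma Cop.symm {a b : BB K ℓ₁ ℓ₂} (h : Cop K ℓ₁ ℓ₂ a b) : Cop K ℓ₁ ℓ₂ b a :=
  fun π hπ h1 h2 => h π hπ h2 h1

lemma cop_one_left {a : BB K ℓ₁ ℓ₂} : Cop K ℓ₁ ℓ₂ 1 a :=
  fun π hπ h1 _ => hπ.not_unit (isUnit_of_dvd_one h1)

lemma monB_ne_zero {μ : BB K ℓ₁ ℓ₂} (h : μ ∈ MonB K ℓ₁ ℓ₂) : μ ≠ 0 := by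
  induction h using Submonoid.closure_induction with
  | mem x hx => obtain ⟨v, _, rfl⟩ := hx; exact MvPolynomial.X_ne_zero v
  | one => exact one_ne_zero
  | mul x y _ _ hx hy => exact mul_ne_zero hx hy

lemma X_dvd_of_prime_dvd_monB {π μ : BB K ℓ₁ ℓ₂} (hπ : Prime π) (hμ : μ ∈ MonB K ℓ₁ ℓ₂)
    (hd : π ∣ μ) : ∃ v, IsSpec ℓ₁ ℓ₂ v ∧ MvPolynomial.X v ∣ π := by
  induction hμ using Submonoid.closure_induction with
  | mem x hx =>
    obtain ⟨v, hv, rfl⟩ := hx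
    obtain ⟨c, hc⟩ := hd
    rcases (prime_XX v).irreducible.isUnit_or_isUnit hc with h | h
    · exact absurd h hπ.not_unit
    · obtain ⟨cu, rfl⟩ := h
      exact ⟨v, hv, (Associated.symm ⟨cu, hc.symm⟩).dvd⟩
  | one => exact absurd (isUnit_of_dvd_one hd) hπ.not_unit
  | mul x y hx hy ihx ihy =>
    rcases hπ.2.2 x y hd with h | h
    · exact ihx h
    · exact ihy h

end CoreDefs

section CoreTools

variable {K : Type} [Field K] {ℓ₁ ℓ₂ : ℕ}

lemma noMF_dvd_cancel {N μ t : BB K ℓ₁ ℓ₂} (hN0 : N ≠ 0) (hN : NoMF K ℓ₁ ℓ₂ N)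
    (hμ : μ ∈ MonB K ℓ₁ ℓ₂) (h : N ∣ μ * t) : N ∣ t := by
  refine UniqueFactorizationMonoid.dvd_of_dvd_mul_right_of_no_prime_factors hN0 ?_ h
  intro π hπN hπμ hπ
  obtain ⟨v, hv, hvd⟩ := X_dvd_of_prime_dvd_monB hπ hμ hπμ
  exact hN v hv (hvd.trans hπN)

lemma cop_pow_cancel {N N' U t : BB K ℓ₁ ℓ₂} (hN0 : N ≠ 0) (hN : NoMF K ℓ₁ ℓ₂ N)
    (hcop : Cop K ℓ₁ ℓ₂ N' N) (hU : U ∈ MonB K ℓ₁ ℓ₂) {d : ℕ}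
    (h : N ∣ (N' * U) ^ d * t) : N ∣ t := by
  refine UniqueFactorizationMonoid.dvd_of_dvd_mul_right_of_no_prime_factors hN0 ?_ h
  intro π hπN hπp hπ
  rcases hπ.2.2 N' U (hπ.dvd_of_dvd_pow hπp) with h' | h'
  · exact hcop π hπ h' hπN
  · obtain ⟨v, hv, hvd⟩ := X_dvd_of_prime_dvd_monB hπ hU h'
    exact hN v hv (hvd.trans hπN)

lemma X_mem_monB {v : {v : Vars // Ok ℓ₁ ℓ₂ v}} (hv : IsSpec ℓ₁ ℓ₂ v) :
    (MvPolynomial.X v : BB K ℓ₁ ℓ₂) ∈ MonB K ℓ₁ ℓ₂ :=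
  Submonoid.subset_closure ⟨v, hv, rfl⟩

lemma exists_strip {h : BB K ℓ₁ ℓ₂} (h0 : h ≠ 0) :
    ∃ μ ∈ MonB K ℓ₁ ℓ₂, ∃ n, n ≠ 0 ∧ NoMF K ℓ₁ ℓ₂ n ∧ h = μ * n := by
  classical
  have irr : ∀ v : {v : Vars // Ok ℓ₁ ℓ₂ v},
      Irreducible (MvPolynomial.X v : BB K ℓ₁ ℓ₂) := fun v => (prime_XX v).irreducible
  obtain ⟨n1, r1, hr1, he1⟩ := WfDvdMonoid.max_power_factor h0 (irr (sx1 ℓ₁ ℓ₂))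
  have hr10 : r1 ≠ 0 := by rintro rfl; simp at he1; exact h0 (by simp [he1])
  obtain ⟨n2, r2, hr2, he2⟩ := WfDvdMonoid.max_power_factor hr10 (irr (sx2 ℓ₁ ℓ₂))
  have hr20 : r2 ≠ 0 := by rintro rfl; simp at he2; exact hr10 (by simp [he2])
  obtain ⟨n3, r3, hr3, he3⟩ := WfDvdMonoid.max_power_factor hr20 (irr (sq1 ℓ₁ ℓ₂))
  have hr30 : r3 ≠ 0 := by rintro rfl; simp at he3; exact hr20 (by simp [he3])
  obtain ⟨n4, r4, hr4, he4⟩ := WfDvdMonoid.max_power_factor hr30 (irr (sq2 ℓ₁ ℓ₂))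
  have hr40 : r4 ≠ 0 := by rintro rfl; simp at he4; exact hr30 (by simp [he4])
  have hd43 : r4 ∣ r3 := ⟨MvPolynomial.X (sq2 ℓ₁ ℓ₂) ^ n4, by rw [he4]; ring⟩
  have hd42 : r4 ∣ r2 := hd43.trans ⟨MvPolynomial.X (sq1 ℓ₁ ℓ₂) ^ n3, by rw [he3]; ring⟩
  have hd41 : r4 ∣ r1 := hd42.trans ⟨MvPolynomial.X (sx2 ℓ₁ ℓ₂) ^ n2, by rw [he2]; ring⟩
  refine ⟨MvPolynomial.X (sx1 ℓ₁ ℓ₂) ^ n1 * MvPolynomial.X (sx2 ℓ₁ ℓ₂) ^ n2 *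
    MvPolynomial.X (sq1 ℓ₁ ℓ₂) ^ n3 * MvPolynomial.X (sq2 ℓ₁ ℓ₂) ^ n4, ?_, r4, hr40, ?_, ?_⟩
  · exact mul_mem (mul_mem (mul_mem
      (pow_mem (X_mem_monB (Or.inl rfl)) n1)
      (pow_mem (X_mem_monB (Or.inr (Or.inl rfl))) n2))
      (pow_mem (X_mem_monB (Or.inr (Or.inr (Or.inl rfl)))) n3))
      (pow_mem (X_mem_monB (Or.inr (Or.inr (Or.inr rfl)))) n4)
  · rintro v (rfl | rfl | rfl | rfl) hdvd
    · exact hr1 (hdvd.trans hd41)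
    · exact hr2 (hdvd.trans hd42)
    · exact hr3 (hdvd.trans hd43)
    · exact hr4 hdvd
  · rw [he1, he2, he3, he4]; ring

lemma noMF_of_constantCoeff {f : BB K ℓ₁ ℓ₂} (h : MvPolynomial.constantCoeff f ≠ 0) :
    NoMF K ℓ₁ ℓ₂ f := by
  rintro v _ ⟨g, rfl⟩
  rw [map_mul, MvPolynomial.constantCoeff_X, zero_mul] at h
  exact h rfl

end CoreTools

section Core

variable {K : Type} [Field K] {ℓ₁ ℓ₂ : ℕ}

variable (K ℓ₁ ℓ₂) in
/-- Homogenized evaluation of the exchange polynomial. -/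
def EpE (c : ℕ → ℕ → BB K ℓ₁ ℓ₂) (dd : ℕ → ℕ) (κ : ℕ) (nn uu vv : BB K ℓ₁ ℓ₂) :
    BB K ℓ₁ ℓ₂ :=
  ∑ j ∈ Finset.range (dd κ + 1), c κ j * (nn * uu) ^ j * vv ^ (dd κ - j)

variable (K ℓ₁ ℓ₂) in
/-- The cleared exchange relation at index `κ`. -/
def RidE (c : ℕ → ℕ → BB K ℓ₁ ℓ₂) (dd : ℕ → ℕ) (m : ℕ → BB K ℓ₁ ℓ₂) (κ : ℕ)
    (n₀ u₀ v₀ np up vp nm um vm : BB K ℓ₁ ℓ₂) : Prop :=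
  m κ * (np * up) * (nm * um) * v₀ ^ dd κ = vp * vm * EpE K ℓ₁ ℓ₂ c dd κ n₀ u₀ v₀

variable (K ℓ₁ ℓ₂) in
/-- A good Laurent representative for `x κ`. -/
def RepOK (x : ℕ → FF K) (κ : ℕ) (n u v : BB K ℓ₁ ℓ₂) : Prop :=
  u ∈ MonB K ℓ₁ ℓ₂ ∧ v ∈ MonB K ℓ₁ ℓ₂ ∧ n ≠ 0 ∧ NoMF K ℓ₁ ℓ₂ n ∧
    x κ = φm K ℓ₁ ℓ₂ n * φm K ℓ₁ ℓ₂ u * (φm K ℓ₁ ℓ₂ v)⁻¹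

variable (K ℓ₁ ℓ₂) in
/-- Good window of four consecutive representations. -/
def GoodW (c : ℕ → ℕ → BB K ℓ₁ ℓ₂) (dd : ℕ → ℕ) (m : ℕ → BB K ℓ₁ ℓ₂)
    (x : ℕ → FF K) (w : ℕ) : Prop :=
  ∃ n0 u0 v0 n1 u1 v1 n2 u2 v2 n3 u3 v3 : BB K ℓ₁ ℓ₂,
    RepOK K ℓ₁ ℓ₂ x w n0 u0 v0 ∧ RepOK K ℓ₁ ℓ₂ x (w+1) n1 u1 v1 ∧
    RepOK K ℓ₁ ℓ₂ x (w+2) n2 u2 v2 ∧ RepOK K ℓ₁ ℓ₂ x (w+3) n3 u3 v3 ∧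
    Cop K ℓ₁ ℓ₂ n0 n1 ∧ Cop K ℓ₁ ℓ₂ n1 n2 ∧ Cop K ℓ₁ ℓ₂ n2 n3 ∧
    RidE K ℓ₁ ℓ₂ c dd m (w+1) n1 u1 v1 n2 u2 v2 n0 u0 v0 ∧
    RidE K ℓ₁ ℓ₂ c dd m (w+2) n2 u2 v2 n3 u3 v3 n1 u1 v1

variable {c : ℕ → ℕ → BB K ℓ₁ ℓ₂} {dd : ℕ → ℕ} {m : ℕ → BB K ℓ₁ ℓ₂} {x : ℕ → FF K}

lemma φm_ne_zero {b : BB K ℓ₁ ℓ₂} (hb : b ≠ 0) : φm K ℓ₁ ℓ₂ b ≠ 0 := by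
  intro h
  exact hb (φm_inj K ℓ₁ ℓ₂ (by simpa using h))

lemma cop_one_right {a : BB K ℓ₁ ℓ₂} : Cop K ℓ₁ ℓ₂ a 1 :=
  fun π hπ _ h1 => hπ.not_unit (isUnit_of_dvd_one h1)

lemma EpE_sub_const (hc0 : ∀ κ, c κ 0 = m κ) (κ : ℕ) (nn uu vv : BB K ℓ₁ ℓ₂) :
    EpE K ℓ₁ ℓ₂ c dd κ nn uu vv - m κ * vv ^ dd κ
      = ∑ i ∈ Finset.range (dd κ), c κ (i+1) * (nn*uu)^(i+1) * vv ^ (dd κ - (i+1)) := by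
  rw [EpE, Finset.sum_range_succ']
  simp only [pow_zero, mul_one, Nat.sub_zero, hc0, one_mul]
  ring

lemma dvd_EpE_sub_const (hc0 : ∀ κ, c κ 0 = m κ) {π : BB K ℓ₁ ℓ₂} (κ : ℕ)
    {nn : BB K ℓ₁ ℓ₂} (uu vv : BB K ℓ₁ ℓ₂) (hπ : π ∣ nn) :
    π ∣ EpE K ℓ₁ ℓ₂ c dd κ nn uu vv - m κ * vv ^ dd κ := by
  rw [EpE_sub_const hc0]
  refine Finset.dvd_sum fun i _ => ?_
  exact (((hπ.trans (dvd_mul_right nn uu)).pow (Nat.succ_ne_zero i)).mul_left _).mul_right _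

/-- The key step: extend a good window one step to the right. -/
lemma goodW_step
    (hrel : ∀ κ, 1 ≤ κ → x (κ+1) * x (κ-1) * φm K ℓ₁ ℓ₂ (m κ) =
      ∑ j ∈ Finset.range (dd κ + 1), φm K ℓ₁ ℓ₂ (c κ j) * x κ ^ j)
    (hx0 : ∀ κ, x κ ≠ 0)
    (hrec : ∀ κ j, j ≤ dd κ → c (κ+2) j = c κ (dd κ - j))
    (hdd : ∀ κ, dd (κ+2) = dd κ)
    (hc0 : ∀ κ, c κ 0 = m κ)
    (hm : ∀ κ, m κ ∈ MonB K ℓ₁ ℓ₂)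
    {w : ℕ} (hW : GoodW K ℓ₁ ℓ₂ c dd m x w) : GoodW K ℓ₁ ℓ₂ c dd m x (w+1) := by
  classical
  obtain ⟨n0, u0, v0, n1, u1, v1, n2, u2, v2, n3, u3, v3,
    h0, h1, h2, h3, hc01, hc12, hc23, hR1, hR2⟩ := hW
  obtain ⟨hu0m, hv0m, hn0ne, hn0mf, hx0r⟩ := h0
  obtain ⟨hu1m, hv1m, hn1ne, hn1mf, hx1r⟩ := h1
  obtain ⟨hu2m, hv2m, hn2ne, hn2mf, hx2r⟩ := h2
  obtain ⟨hu3m, hv3m, hn3ne, hn3mf, hx3r⟩ := h3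
  rw [RidE] at hR1 hR2
  have hd1 : dd (w+1) = dd (w+3) := (hdd (w+1)).symm
  -- (1) n2 divides EpE at w+1
  have divE1 : n2 ∣ EpE K ℓ₁ ℓ₂ c dd (w+1) n1 u1 v1 := by
    have hdvd : n2 ∣ m (w+1) * (n2 * u2) * (n0 * u0) * v1 ^ dd (w+1) :=
      ⟨m (w+1) * u2 * (n0 * u0) * v1 ^ dd (w+1), by ring⟩
    rw [hR1] at hdvd
    exact noMF_dvd_cancel hn2ne hn2mf (mul_mem hv2m hv0m) hdvd
  -- (2) congruence a₊a₋ ≡ b₊b₋ modulo n2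
  have congAB : n2 ∣ n3 * u3 * (n1 * u1) - v3 * v1 := by
    have hlin : m (w+2) * v2 ^ dd (w+2) * (n3 * u3 * (n1 * u1) - v3 * v1)
        = v3 * v1 * (EpE K ℓ₁ ℓ₂ c dd (w+2) n2 u2 v2 - m (w+2) * v2 ^ dd (w+2)) := by
      linear_combination hR2
    have hdvd : n2 ∣ m (w+2) * v2 ^ dd (w+2) * (n3 * u3 * (n1 * u1) - v3 * v1) := by
      rw [hlin]
      exact (dvd_EpE_sub_const hc0 (w+2) u2 v2 dvd_rfl).mul_left _
    exact noMF_dvd_cancel hn2ne hn2mf (mul_mem (hm _) (pow_mem hv2m _)) hdvd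
  -- (3) key identity
  have keyId : (n1*u1) ^ dd (w+3) * EpE K ℓ₁ ℓ₂ c dd (w+3) n3 u3 v3
      - v3 ^ dd (w+3) * EpE K ℓ₁ ℓ₂ c dd (w+1) n1 u1 v1
      = ∑ j ∈ Finset.range (dd (w+3) + 1), c (w+3) j *
          ((n1*u1) ^ (dd (w+3) - j) * v3 ^ (dd (w+3) - j)) *
          ((n3*u3*(n1*u1)) ^ j - (v3*v1) ^ j) := by
    rw [EpE, EpE, hd1, Finset.mul_sum, Finset.mul_sum]
    rw [← Finset.sum_range_reflect
      (fun i => v3 ^ dd (w+3) * (c (w+1) i * (n1*u1) ^ i * v1 ^ (dd (w+3) - i))) (dd (w+3) + 1)]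
    rw [← Finset.sum_sub_distrib]
    refine Finset.sum_congr rfl fun j hj => ?_
    have hjd : j ≤ dd (w+3) := Nat.lt_succ_iff.mp (Finset.mem_range.mp hj)
    have e0 : dd (w+3) + 1 - 1 - j = dd (w+3) - j := by omega
    have e2 : v1 ^ (dd (w+3) - (dd (w+3) - j)) = v1 ^ j := by congr 1; omega
    have e3 : c (w+1) (dd (w+3) - j) = c (w+3) j := by
      have h' := hrec (w+1) j (by omega)
      rw [h', hd1]
    have e1 : (n1*u1) ^ dd (w+3) = (n1*u1) ^ (dd (w+3) - j) * (n1*u1) ^ j := by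
      rw [← pow_add]; congr 1; omega
    have e4 : v3 ^ dd (w+3) = v3 ^ (dd (w+3) - j) * v3 ^ j := by
      rw [← pow_add]; congr 1; omega
    rw [e0, e2, e3, e1, e4]
    ring
  have keyDvd : n2 ∣ (n1*u1) ^ dd (w+3) * EpE K ℓ₁ ℓ₂ c dd (w+3) n3 u3 v3 := by
    have hsum : n2 ∣ ∑ j ∈ Finset.range (dd (w+3) + 1), c (w+3) j *
        ((n1*u1) ^ (dd (w+3) - j) * v3 ^ (dd (w+3) - j)) *
        ((n3*u3*(n1*u1)) ^ j - (v3*v1) ^ j) :=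
      Finset.dvd_sum fun j _ =>
        (congAB.trans (sub_dvd_pow_sub_pow _ _ j)).mul_left _
    rw [← keyId] at hsum
    have hE1 : n2 ∣ v3 ^ dd (w+3) * EpE K ℓ₁ ℓ₂ c dd (w+1) n1 u1 v1 := divE1.mul_left _
    have h' := dvd_add hsum hE1
    simpa [sub_add_cancel] using h'
  have divE3 : n2 ∣ EpE K ℓ₁ ℓ₂ c dd (w+3) n3 u3 v3 :=
    cop_pow_cancel hn2ne hn2mf hc12 hu1m keyDvd
  -- (4) nonvanishing of EpE at w+3
  have hv3ne : φm K ℓ₁ ℓ₂ v3 ≠ 0 := φm_ne_zero (monB_ne_zero hv3m)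
  have hVclear : (φm K ℓ₁ ℓ₂ v3) ^ dd (w+3) *
      (∑ j ∈ Finset.range (dd (w+3) + 1), φm K ℓ₁ ℓ₂ (c (w+3) j) * x (w+3) ^ j)
      = φm K ℓ₁ ℓ₂ (EpE K ℓ₁ ℓ₂ c dd (w+3) n3 u3 v3) := by
    rw [EpE, map_sum, Finset.mul_sum]
    refine Finset.sum_congr rfl fun j hj => ?_
    have hjd : j ≤ dd (w+3) := Nat.lt_succ_iff.mp (Finset.mem_range.mp hj)
    rw [hx3r, map_mul, map_mul, map_pow, map_pow]
    have e4 : (φm K ℓ₁ ℓ₂ v3) ^ dd (w+3)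
        = (φm K ℓ₁ ℓ₂ v3) ^ (dd (w+3) - j) * (φm K ℓ₁ ℓ₂ v3) ^ j := by
      rw [← pow_add]; congr 1; omega
    rw [e4]
    field_simp
    have hvv : (φm K ℓ₁ ℓ₂ v3) ^ j * ((φm K ℓ₁ ℓ₂ v3)⁻¹) ^ j = 1 := by
      rw [← mul_pow, mul_inv_cancel₀ hv3ne, one_pow]
    rw [map_mul]
    linear_combination (φm K ℓ₁ ℓ₂ (c (w + 3) j) * φm K ℓ₁ ℓ₂ n3 ^ j * φm K ℓ₁ ℓ₂ u3 ^ j) * hvv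
  have hidx : w + 3 - 1 = w + 2 := by omega
  have hrel3 := hrel (w+3) (by omega)
  rw [hidx] at hrel3
  have master : x (w+3+1) * x (w+2) * φm K ℓ₁ ℓ₂ (m (w+3)) * (φm K ℓ₁ ℓ₂ v3) ^ dd (w+3)
      = φm K ℓ₁ ℓ₂ (EpE K ℓ₁ ℓ₂ c dd (w+3) n3 u3 v3) := by
    rw [← hVclear, ← hrel3]
    ring
  have hE3ne : EpE K ℓ₁ ℓ₂ c dd (w+3) n3 u3 v3 ≠ 0 := by
    intro h
    rw [h, map_zero] at master
    rcases mul_eq_zero.mp master with h' | h'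
    · rcases mul_eq_zero.mp h' with h'' | h''
      · rcases mul_eq_zero.mp h'' with h3 | h3
        · exact hx0 _ h3
        · exact hx0 _ h3
      · exact φm_ne_zero (monB_ne_zero (hm _)) h''
    · exact pow_ne_zero _ hv3ne h'
  obtain ⟨t, ht⟩ := divE3
  have htne : t ≠ 0 := by
    rintro rfl
    rw [mul_zero] at ht
    exact hE3ne ht
  obtain ⟨μ, hμm, n4, hn4ne, hn4mf, htμ⟩ := exists_strip htne
  have hE3fact : EpE K ℓ₁ ℓ₂ c dd (w+3) n3 u3 v3 = n2 * (μ * n4) := by rw [ht, htμ]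
  -- (5) new representation for x (w+4)
  have hmne : φm K ℓ₁ ℓ₂ (m (w+3)) ≠ 0 := φm_ne_zero (monB_ne_zero (hm _))
  have hv2ne : φm K ℓ₁ ℓ₂ v2 ≠ 0 := φm_ne_zero (monB_ne_zero hv2m)
  have hu2ne : φm K ℓ₁ ℓ₂ u2 ≠ 0 := φm_ne_zero (monB_ne_zero hu2m)
  have hn2ne' : φm K ℓ₁ ℓ₂ n2 ≠ 0 := φm_ne_zero hn2ne
  have hx4r : x (w+1+3) = φm K ℓ₁ ℓ₂ n4 * φm K ℓ₁ ℓ₂ (μ * v2) *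
      (φm K ℓ₁ ℓ₂ (m (w+3) * v3 ^ dd (w+3) * u2))⁻¹ := by
    have hprodne : x (w+2) * φm K ℓ₁ ℓ₂ (m (w+3)) * (φm K ℓ₁ ℓ₂ v3) ^ dd (w+3) ≠ 0 :=
      mul_ne_zero (mul_ne_zero (hx0 _) hmne) (pow_ne_zero _ hv3ne)
    have hx4 : x (w+3+1) = φm K ℓ₁ ℓ₂ (n2 * (μ * n4)) /
        (x (w+2) * φm K ℓ₁ ℓ₂ (m (w+3)) * (φm K ℓ₁ ℓ₂ v3) ^ dd (w+3)) := by
      rw [eq_div_iff hprodne, ← hE3fact]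
      linear_combination master
    have hidx2 : w + 1 + 3 = w + 3 + 1 := by omega
    rw [hidx2, hx4, hx2r]
    simp only [map_mul, map_pow]
    field_simp
  -- (6) coprimality of n3 and n4
  have hcop34 : Cop K ℓ₁ ℓ₂ n3 n4 := by
    intro π hπ hπ3 hπ4
    have hπE : π ∣ EpE K ℓ₁ ℓ₂ c dd (w+3) n3 u3 v3 := by
      rw [hE3fact]
      exact Dvd.dvd.mul_left (hπ4.mul_left μ) n2
    have hπtail : π ∣ EpE K ℓ₁ ℓ₂ c dd (w+3) n3 u3 v3 - m (w+3) * v3 ^ dd (w+3) :=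
      dvd_EpE_sub_const hc0 (w+3) u3 v3 hπ3
    have hπmon : π ∣ m (w+3) * v3 ^ dd (w+3) := by
      have h' := dvd_sub hπE hπtail
      simpa using h'
    obtain ⟨v, hv, hvd⟩ := X_dvd_of_prime_dvd_monB hπ (mul_mem (hm _) (pow_mem hv3m _)) hπmon
    exact hn4mf v hv (hvd.trans hπ4)
  -- (7) new exchange relation
  have hR3 : RidE K ℓ₁ ℓ₂ c dd m (w+3) n3 u3 v3 n4 (μ * v2)
      (m (w+3) * v3 ^ dd (w+3) * u2) n2 u2 v2 := by
    rw [RidE, hE3fact]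
    ring
  refine ⟨n1, u1, v1, n2, u2, v2, n3, u3, v3, n4, μ * v2,
    m (w+3) * v3 ^ dd (w+3) * u2,
    ⟨hu1m, hv1m, hn1ne, hn1mf, hx1r⟩, ⟨hu2m, hv2m, hn2ne, hn2mf, hx2r⟩,
    ⟨hu3m, hv3m, hn3ne, hn3mf, hx3r⟩,
    ⟨mul_mem hμm hv2m, mul_mem (mul_mem (hm _) (pow_mem hv3m _)) hu2m,
      hn4ne, hn4mf, hx4r⟩,
    hc12, hc23, hcop34, ?_, ?_⟩
  · rw [RidE]; exact hR2
  · exact hR3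

lemma goodW_base
    (hrel : ∀ κ, 1 ≤ κ → x (κ+1) * x (κ-1) * φm K ℓ₁ ℓ₂ (m κ) =
      ∑ j ∈ Finset.range (dd κ + 1), φm K ℓ₁ ℓ₂ (c κ j) * x κ ^ j)
    (hx0 : ∀ κ, x κ ≠ 0)
    (hc0 : ∀ κ, c κ 0 = m κ)
    (hm : ∀ κ, m κ ∈ MonB K ℓ₁ ℓ₂)
    {w1v w2v : {v : Vars // Ok ℓ₁ ℓ₂ v}} (hs1 : IsSpec ℓ₁ ℓ₂ w1v) (hs2 : IsSpec ℓ₁ ℓ₂ w2v)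
    (hx1 : x 1 = φm K ℓ₁ ℓ₂ (MvPolynomial.X w1v))
    (hx2 : x 2 = φm K ℓ₁ ℓ₂ (MvPolynomial.X w2v))
    (hm1 : m 1 = 1) (hm2 : m 2 = 1) :
    GoodW K ℓ₁ ℓ₂ c dd m x 0 := by
  classical
  have hCCE : ∀ κ (uu : BB K ℓ₁ ℓ₂), MvPolynomial.constantCoeff uu = 0 → m κ = 1 →
      MvPolynomial.constantCoeff (EpE K ℓ₁ ℓ₂ c dd κ 1 uu 1) = 1 := by
    intro κ uu huu hmκ
    rw [EpE, map_sum, Finset.sum_eq_single 0]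
    · simp [hc0, hmκ]
    · intro j _ hj0
      simp [huu, zero_pow hj0]
    · intro h
      simp at h
  have hCC0 : MvPolynomial.constantCoeff (EpE K ℓ₁ ℓ₂ c dd 1 1 (MvPolynomial.X w1v) 1) = 1 :=
    hCCE 1 _ (by simp) hm1
  have hCC3 : MvPolynomial.constantCoeff (EpE K ℓ₁ ℓ₂ c dd 2 1 (MvPolynomial.X w2v) 1) = 1 :=
    hCCE 2 _ (by simp) hm2
  have hn0ne : EpE K ℓ₁ ℓ₂ c dd 1 1 (MvPolynomial.X w1v) 1 ≠ 0 := by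
    intro h; rw [h, map_zero] at hCC0; exact zero_ne_one hCC0
  have hn3ne : EpE K ℓ₁ ℓ₂ c dd 2 1 (MvPolynomial.X w2v) 1 ≠ 0 := by
    intro h; rw [h, map_zero] at hCC3; exact zero_ne_one hCC3
  have hn0mf : NoMF K ℓ₁ ℓ₂ (EpE K ℓ₁ ℓ₂ c dd 1 1 (MvPolynomial.X w1v) 1) :=
    noMF_of_constantCoeff (by rw [hCC0]; exact one_ne_zero)
  have hn3mf : NoMF K ℓ₁ ℓ₂ (EpE K ℓ₁ ℓ₂ c dd 2 1 (MvPolynomial.X w2v) 1) :=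
    noMF_of_constantCoeff (by rw [hCC3]; exact one_ne_zero)
  have hone_mf : NoMF K ℓ₁ ℓ₂ (1 : BB K ℓ₁ ℓ₂) :=
    noMF_of_constantCoeff (by simp)
  -- sums
  have hsum1 : ∑ j ∈ Finset.range (dd 1 + 1), φm K ℓ₁ ℓ₂ (c 1 j) * x 1 ^ j
      = φm K ℓ₁ ℓ₂ (EpE K ℓ₁ ℓ₂ c dd 1 1 (MvPolynomial.X w1v) 1) := by
    rw [EpE, map_sum]
    refine Finset.sum_congr rfl fun j _ => ?_
    rw [hx1]
    simp [map_mul, map_pow]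
  have hsum2 : ∑ j ∈ Finset.range (dd 2 + 1), φm K ℓ₁ ℓ₂ (c 2 j) * x 2 ^ j
      = φm K ℓ₁ ℓ₂ (EpE K ℓ₁ ℓ₂ c dd 2 1 (MvPolynomial.X w2v) 1) := by
    rw [EpE, map_sum]
    refine Finset.sum_congr rfl fun j _ => ?_
    rw [hx2]
    simp [map_mul, map_pow]
  have hm1ne : φm K ℓ₁ ℓ₂ (m 1) ≠ 0 := φm_ne_zero (monB_ne_zero (hm 1))
  have hm2ne : φm K ℓ₁ ℓ₂ (m 2) ≠ 0 := φm_ne_zero (monB_ne_zero (hm 2))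
  have hX1ne : φm K ℓ₁ ℓ₂ (MvPolynomial.X w1v : BB K ℓ₁ ℓ₂) ≠ 0 :=
    φm_ne_zero (MvPolynomial.X_ne_zero _)
  have hX2ne : φm K ℓ₁ ℓ₂ (MvPolynomial.X w2v : BB K ℓ₁ ℓ₂) ≠ 0 :=
    φm_ne_zero (MvPolynomial.X_ne_zero _)
  -- representation of x 0
  have hx0r : x 0 = φm K ℓ₁ ℓ₂ (EpE K ℓ₁ ℓ₂ c dd 1 1 (MvPolynomial.X w1v) 1) *
      φm K ℓ₁ ℓ₂ 1 * (φm K ℓ₁ ℓ₂ (m 1 * MvPolynomial.X w2v))⁻¹ := by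
    have hrel1 := hrel 1 le_rfl
    have : x 0 = φm K ℓ₁ ℓ₂ (EpE K ℓ₁ ℓ₂ c dd 1 1 (MvPolynomial.X w1v) 1) /
        (x 2 * φm K ℓ₁ ℓ₂ (m 1)) := by
      rw [eq_div_iff (mul_ne_zero (hx0 2) hm1ne)]
      linear_combination hrel1 + hsum1
    rw [this, hx2]
    simp only [map_mul, map_one]
    field_simp
  -- representation of x 3
  have hx3r : x 3 = φm K ℓ₁ ℓ₂ (EpE K ℓ₁ ℓ₂ c dd 2 1 (MvPolynomial.X w2v) 1) *
      φm K ℓ₁ ℓ₂ 1 * (φm K ℓ₁ ℓ₂ (m 2 * MvPolynomial.X w1v))⁻¹ := by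
    have hrel2 := hrel 2 (by omega)
    have : x 3 = φm K ℓ₁ ℓ₂ (EpE K ℓ₁ ℓ₂ c dd 2 1 (MvPolynomial.X w2v) 1) /
        (x 1 * φm K ℓ₁ ℓ₂ (m 2)) := by
      rw [eq_div_iff (mul_ne_zero (hx0 1) hm2ne)]
      linear_combination hrel2 + hsum2
    rw [this, hx1]
    simp only [map_mul, map_one]
    field_simp
  refine ⟨EpE K ℓ₁ ℓ₂ c dd 1 1 (MvPolynomial.X w1v) 1, 1, m 1 * MvPolynomial.X w2v,
    1, MvPolynomial.X w1v, 1,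
    1, MvPolynomial.X w2v, 1,
    EpE K ℓ₁ ℓ₂ c dd 2 1 (MvPolynomial.X w2v) 1, 1, m 2 * MvPolynomial.X w1v,
    ⟨one_mem _, mul_mem (hm 1) (X_mem_monB hs2), hn0ne, hn0mf, hx0r⟩,
    ⟨X_mem_monB hs1, one_mem _, one_ne_zero, hone_mf, by
      rw [hx1]; simp⟩,
    ⟨X_mem_monB hs2, one_mem _, one_ne_zero, hone_mf, by
      rw [hx2]; simp⟩,
    ⟨one_mem _, mul_mem (hm 2) (X_mem_monB hs1), hn3ne, hn3mf, hx3r⟩,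
    ?_, cop_one_left, cop_one_left, ?_, ?_⟩
  · intro π hπ _ h1
    exact hπ.not_unit (isUnit_of_dvd_one h1)
  · rw [RidE]
    ring
  · rw [RidE]
    ring

lemma goodW_all
    (hrel : ∀ κ, 1 ≤ κ → x (κ+1) * x (κ-1) * φm K ℓ₁ ℓ₂ (m κ) =
      ∑ j ∈ Finset.range (dd κ + 1), φm K ℓ₁ ℓ₂ (c κ j) * x κ ^ j)
    (hx0 : ∀ κ, x κ ≠ 0)
    (hrec : ∀ κ j, j ≤ dd κ → c (κ+2) j = c κ (dd κ - j))
    (hdd : ∀ κ, dd (κ+2) = dd κ)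
    (hc0 : ∀ κ, c κ 0 = m κ)
    (hm : ∀ κ, m κ ∈ MonB K ℓ₁ ℓ₂)
    {w1v w2v : {v : Vars // Ok ℓ₁ ℓ₂ v}} (hs1 : IsSpec ℓ₁ ℓ₂ w1v) (hs2 : IsSpec ℓ₁ ℓ₂ w2v)
    (hx1 : x 1 = φm K ℓ₁ ℓ₂ (MvPolynomial.X w1v))
    (hx2 : x 2 = φm K ℓ₁ ℓ₂ (MvPolynomial.X w2v))
    (hm1 : m 1 = 1) (hm2 : m 2 = 1) :
    ∀ κ, ∃ n u v : BB K ℓ₁ ℓ₂, u ∈ MonB K ℓ₁ ℓ₂ ∧ v ∈ MonB K ℓ₁ ℓ₂ ∧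
      x κ = φm K ℓ₁ ℓ₂ n * φm K ℓ₁ ℓ₂ u * (φm K ℓ₁ ℓ₂ v)⁻¹ := by
  have hG : ∀ w, GoodW K ℓ₁ ℓ₂ c dd m x w := by
    intro w
    induction w with
    | zero => exact goodW_base hrel hx0 hc0 hm hs1 hs2 hx1 hx2 hm1 hm2
    | succ w ih => exact goodW_step hrel hx0 hrec hdd hc0 hm ih
  intro κ
  obtain ⟨n0, u0, v0, _, _, _, _, _, _, _, _, _, h0, _⟩ := hG κ
  exact ⟨n0, u0, v0, h0.1, h0.2.1, h0.2.2.2.2⟩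

end Core


section Laurent

variable {K : Type} [Field K] {ℓ₁ ℓ₂ : ℕ}

lemma φm_X_val (v : {v : Vars // Ok ℓ₁ ℓ₂ v}) :
    φm K ℓ₁ ℓ₂ (MvPolynomial.X v) = ev K v.val := by
  simp [φm, ev, ι, MvPolynomial.rename_X]

lemma ev_mem_laurent (hℓ₁ : 1 ≤ ℓ₁) (hℓ₂ : 1 ≤ ℓ₂) (v : Vars) (hok : Ok ℓ₁ ℓ₂ v) :
    ev K v ∈ LaurentRing K ℓ₁ ℓ₂ := by
  apply Subring.subset_closure
  rcases v with ⟨i, j⟩ | b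
  · rcases hok with ⟨h1, h2⟩ | ⟨hi, hj⟩ | ⟨hi, hj⟩
    · fin_cases i
      · refine Set.mem_union_left _ (Set.mem_union_right _ ?_)
        exact Set.mem_union_left _ ⟨j, ⟨h1, by simpa using h2⟩, rfl⟩
      · refine Set.mem_union_left _ (Set.mem_union_right _ ?_)
        refine Set.mem_union_right _ ⟨j, ⟨h1, ?_⟩, rfl⟩
        simpa using h2
    · subst hi
      refine Set.mem_union_left _ (Set.mem_union_right _ ?_)
      exact Set.mem_union_left _ ⟨j, ⟨by omega, by omega⟩, rfl⟩
    · subst hi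
      refine Set.mem_union_left _ (Set.mem_union_right _ ?_)
      exact Set.mem_union_right _ ⟨j, ⟨by omega, by omega⟩, rfl⟩
  · fin_cases b
    · refine Set.mem_union_right _ ?_
      simp [x1]
    · refine Set.mem_union_right _ ?_
      simp [x2]

lemma φm_mem_laurent (hℓ₁ : 1 ≤ ℓ₁) (hℓ₂ : 1 ≤ ℓ₂) (b : BB K ℓ₁ ℓ₂) :
    φm K ℓ₁ ℓ₂ b ∈ LaurentRing K ℓ₁ ℓ₂ := by
  induction b using MvPolynomial.induction_on with
  | C a =>
    apply Subring.subset_closure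
    refine Set.mem_union_left _ (Set.mem_union_left _ ?_)
    exact ⟨a, by simp [φm, ι, MvPolynomial.rename_C]⟩
  | add f g hf hg =>
    rw [RingHom.map_add]
    exact add_mem hf hg
  | mul_X f v hf =>
    rw [map_mul, φm_X_val]
    exact mul_mem hf (ev_mem_laurent hℓ₁ hℓ₂ v.val v.prop)

lemma inv_spec_mem_laurent (hℓ₁ : 1 ≤ ℓ₁) (hℓ₂ : 1 ≤ ℓ₂)
    {v : {v : Vars // Ok ℓ₁ ℓ₂ v}} (hv : IsSpec ℓ₁ ℓ₂ v) :
    (φm K ℓ₁ ℓ₂ (MvPolynomial.X v))⁻¹ ∈ LaurentRing K ℓ₁ ℓ₂ := by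
  rw [φm_X_val]
  rcases hv with rfl | rfl | rfl | rfl
  · apply Subring.subset_closure
    refine Set.mem_union_right _ ?_
    show (x1 K)⁻¹ ∈ _
    simp
  · apply Subring.subset_closure
    refine Set.mem_union_right _ ?_
    show (x2 K)⁻¹ ∈ _
    simp
  · apply Subring.subset_closure
    refine Set.mem_union_right _ ?_
    show (p K 0 ℓ₁)⁻¹ ∈ _
    simp
  · apply Subring.subset_closure
    refine Set.mem_union_right _ ?_
    show (p K 1 ℓ₂)⁻¹ ∈ _
    simp

lemma monB_inv_mem_laurent (hℓ₁ : 1 ≤ ℓ₁) (hℓ₂ : 1 ≤ ℓ₂)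
    {μ : BB K ℓ₁ ℓ₂} (hμ : μ ∈ MonB K ℓ₁ ℓ₂) :
    (φm K ℓ₁ ℓ₂ μ)⁻¹ ∈ LaurentRing K ℓ₁ ℓ₂ := by
  induction hμ using Submonoid.closure_induction with
  | mem y hy =>
    obtain ⟨v, hv, rfl⟩ := hy
    exact inv_spec_mem_laurent hℓ₁ hℓ₂ hv
  | one =>
    rw [map_one, inv_one]
    exact one_mem _
  | mul a b _ _ iha ihb =>
    rw [map_mul, mul_inv]
    exact mul_mem iha ihb

end Laurent


section Inst

variable {K : Type} [Field K] [CharZero K] {ℓ₁ ℓ₂ : ℕ}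

lemma ev_ne_zero (v : Vars) : ev K v ≠ 0 := by
  intro h
  refine MvPolynomial.X_ne_zero (R := K) v (ι_inj K ?_)
  rw [RingHom.map_zero]
  exact h

variable (K ℓ₁ ℓ₂) in
/-- The coefficient polynomials. -/
def pcB (i : Fin 2) (t : ℕ) : BB K ℓ₁ ℓ₂ :=
  if t = 0 then 1
  else if h : 1 ≤ t ∧ t ≤ (if i = 0 then ℓ₁ else ℓ₂) then
    MvPolynomial.X ⟨.inl (i, t), Or.inl h⟩
  else 0

lemma pcB_zero (i : Fin 2) : pcB K ℓ₁ ℓ₂ i 0 = 1 := if_pos rfl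

lemma pcB_in {i : Fin 2} {t : ℕ} (h1 : 1 ≤ t) (h2 : t ≤ (if i = 0 then ℓ₁ else ℓ₂)) :
    pcB K ℓ₁ ℓ₂ i t = MvPolynomial.X ⟨.inl (i, t), Or.inl ⟨h1, h2⟩⟩ := by
  rw [pcB, if_neg (by omega), dif_pos ⟨h1, h2⟩]

lemma φ_pcB {i : Fin 2} {t : ℕ} (h1 : 1 ≤ t) (h2 : t ≤ (if i = 0 then ℓ₁ else ℓ₂)) :
    φm K ℓ₁ ℓ₂ (pcB K ℓ₁ ℓ₂ i t) = p K i t := by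
  rw [pcB_in h1 h2, φm_X_val]
  rfl

lemma pcB_q1 (hℓ₁ : 1 ≤ ℓ₁) :
    pcB K ℓ₁ ℓ₂ 0 ℓ₁ = MvPolynomial.X (sq1 ℓ₁ ℓ₂) := by
  rw [pcB_in hℓ₁ (by simp)]
  rfl

lemma pcB_q2 (hℓ₂ : 1 ≤ ℓ₂) :
    pcB K ℓ₁ ℓ₂ 1 ℓ₂ = MvPolynomial.X (sq2 ℓ₁ ℓ₂) := by
  rw [pcB_in hℓ₂ (by norm_num)]
  rfl

lemma sum_eq_P (i : Fin 2) (ℓ : ℕ) (hi : (if i = 0 then ℓ₁ else ℓ₂) = ℓ) (z : FF K) :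
    ∑ j ∈ Finset.range (ℓ + 1), φm K ℓ₁ ℓ₂ (pcB K ℓ₁ ℓ₂ i j) * z ^ j
      = 1 + ∑ j ∈ Finset.Icc 1 ℓ, p K i j * z ^ j := by
  rw [Finset.sum_range_succ', pcB_zero, map_one, one_mul, pow_zero, add_comm]
  congr 1
  rw [← Finset.Ico_add_one_right_eq_Icc, Finset.sum_Ico_eq_sum_range]
  have hr : ℓ + 1 - 1 = ℓ := by omega
  rw [hr]
  refine Finset.sum_congr rfl fun j hj => ?_
  have hj' : j < ℓ := Finset.mem_range.mp hj
  have e1 : (1 : ℕ) + j = j + 1 := by omega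
  rw [e1, φ_pcB (by omega) (by omega)]

lemma sum_eq_Pbar (i : Fin 2) (ℓ : ℕ) (hi : (if i = 0 then ℓ₁ else ℓ₂) = ℓ)
    (hℓ : 1 ≤ ℓ) (z : FF K) (hz : z ≠ 0) :
    ∑ j ∈ Finset.range (ℓ + 1), φm K ℓ₁ ℓ₂ (pcB K ℓ₁ ℓ₂ i (ℓ - j)) * z ^ j
      = p K i ℓ * ((p K i ℓ)⁻¹ * z ^ ℓ * (1 + ∑ j ∈ Finset.Icc 1 ℓ, p K i j * (z⁻¹) ^ j)) := by
  have hq : p K i ℓ ≠ 0 := ev_ne_zero _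
  rw [← mul_assoc, ← mul_assoc, mul_inv_cancel₀ hq, one_mul, mul_add, mul_one, Finset.mul_sum]
  rw [Finset.sum_range_succ, Nat.sub_self, pcB_zero, map_one, one_mul, add_comm]
  congr 1
  rw [← Finset.Ico_add_one_right_eq_Icc, Finset.sum_Ico_eq_sum_range]
  have hr : ℓ + 1 - 1 = ℓ := by omega
  rw [hr]
  rw [← Finset.sum_range_reflect (fun j => φm K ℓ₁ ℓ₂ (pcB K ℓ₁ ℓ₂ i (ℓ - j)) * z ^ j) ℓ]
  refine Finset.sum_congr rfl fun j hj => ?_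
  have hj' : j < ℓ := Finset.mem_range.mp hj
  have e1 : ℓ - (ℓ - 1 - j) = j + 1 := by omega
  have e2 : (1 : ℕ) + j = j + 1 := by omega
  rw [e1, e2, φ_pcB (by omega) (by omega)]
  have e3 : z ^ ℓ = z ^ (ℓ - 1 - j) * z ^ (j + 1) := by rw [← pow_add]; congr 1; omega
  rw [e3]
  field_simp
  ring_nf
  have hzz : z * z⁻¹ = 1 := mul_inv_cancel₀ hz
  have hzz' : z ^ j * z⁻¹ ^ j = 1 := by rw [← mul_pow, hzz, one_pow]
  linear_combination (-(p K i (1 + j)) * z ^ j * z⁻¹ ^ j) * hzz + (-(p K i (1 + j))) * hzz'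

variable (K ℓ₁ ℓ₂) in
def cF (κ j : ℕ) : BB K ℓ₁ ℓ₂ :=
  if κ % 4 = 1 then pcB K ℓ₁ ℓ₂ 0 j
  else if κ % 4 = 2 then pcB K ℓ₁ ℓ₂ 1 j
  else if κ % 4 = 3 then pcB K ℓ₁ ℓ₂ 0 (ℓ₁ - j)
  else pcB K ℓ₁ ℓ₂ 1 (ℓ₂ - j)

variable (ℓ₁ ℓ₂) in
def dF (κ : ℕ) : ℕ := if κ % 4 = 1 ∨ κ % 4 = 3 then ℓ₁ else ℓ₂

variable (K ℓ₁ ℓ₂) in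
def mF (κ : ℕ) : BB K ℓ₁ ℓ₂ :=
  if κ % 4 = 3 then pcB K ℓ₁ ℓ₂ 0 ℓ₁
  else if κ % 4 = 0 then pcB K ℓ₁ ℓ₂ 1 ℓ₂
  else 1

variable (K ℓ₁ ℓ₂) in
def cB (κ j : ℕ) : BB K ℓ₁ ℓ₂ :=
  if κ % 4 = 1 then pcB K ℓ₁ ℓ₂ 1 j
  else if κ % 4 = 2 then pcB K ℓ₁ ℓ₂ 0 j
  else if κ % 4 = 3 then pcB K ℓ₁ ℓ₂ 1 (ℓ₂ - j)
  else pcB K ℓ₁ ℓ₂ 0 (ℓ₁ - j)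

variable (ℓ₁ ℓ₂) in
def dB (κ : ℕ) : ℕ := if κ % 4 = 1 ∨ κ % 4 = 3 then ℓ₂ else ℓ₁

variable (K ℓ₁ ℓ₂) in
def mB (κ : ℕ) : BB K ℓ₁ ℓ₂ :=
  if κ % 4 = 3 then pcB K ℓ₁ ℓ₂ 1 ℓ₂
  else if κ % 4 = 0 then pcB K ℓ₁ ℓ₂ 0 ℓ₁
  else 1

lemma hrecF : ∀ κ j, j ≤ dF ℓ₁ ℓ₂ κ → cF K ℓ₁ ℓ₂ (κ+2) j = cF K ℓ₁ ℓ₂ κ (dF ℓ₁ ℓ₂ κ - j) := by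
  intro κ j hj
  have h4 : κ % 4 = 0 ∨ κ % 4 = 1 ∨ κ % 4 = 2 ∨ κ % 4 = 3 := by omega
  rcases h4 with h | h | h | h
  · have h2 : (κ+2) % 4 = 2 := by omega
    have hj' : j ≤ ℓ₂ := by simpa [dF, h] using hj
    simp only [cF, dF, h, h2]
    norm_num
    congr 1
    omega
  · have h2 : (κ+2) % 4 = 3 := by omega
    simp [cF, dF, h, h2]
  · have h2 : (κ+2) % 4 = 0 := by omega
    simp [cF, dF, h, h2]
  · have h2 : (κ+2) % 4 = 1 := by omega
    have hj' : j ≤ ℓ₁ := by simpa [dF, h] using hj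
    simp only [cF, dF, h, h2]
    norm_num
    congr 1
    omega

lemma hddF : ∀ κ, dF ℓ₁ ℓ₂ (κ+2) = dF ℓ₁ ℓ₂ κ := by
  intro κ
  have h4 : κ % 4 = 0 ∨ κ % 4 = 1 ∨ κ % 4 = 2 ∨ κ % 4 = 3 := by omega
  have h2 : (κ+2) % 4 = (κ % 4 + 2) % 4 := by omega
  rcases h4 with h | h | h | h <;> simp [dF, h, h2]

lemma hc0F (hℓ₁ : 1 ≤ ℓ₁) (hℓ₂ : 1 ≤ ℓ₂) : ∀ κ, cF K ℓ₁ ℓ₂ κ 0 = mF K ℓ₁ ℓ₂ κ := by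
  intro κ
  have h4 : κ % 4 = 0 ∨ κ % 4 = 1 ∨ κ % 4 = 2 ∨ κ % 4 = 3 := by omega
  rcases h4 with h | h | h | h <;> simp [cF, mF, h, pcB_zero]

lemma hmFmon (hℓ₁ : 1 ≤ ℓ₁) (hℓ₂ : 1 ≤ ℓ₂) : ∀ κ, mF K ℓ₁ ℓ₂ κ ∈ MonB K ℓ₁ ℓ₂ := by
  intro κ
  have h4 : κ % 4 = 0 ∨ κ % 4 = 1 ∨ κ % 4 = 2 ∨ κ % 4 = 3 := by omega
  rcases h4 with h | h | h | h
  · simp only [mF, h]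
    norm_num
    rw [pcB_q2 hℓ₂]
    exact X_mem_monB (Or.inr (Or.inr (Or.inr rfl)))
  · simp only [mF, h]
    norm_num
  · simp only [mF, h]
    norm_num
  · simp only [mF, h]
    norm_num
    rw [pcB_q1 hℓ₁]
    exact X_mem_monB (Or.inr (Or.inr (Or.inl rfl)))

lemma hrecB : ∀ κ j, j ≤ dB ℓ₁ ℓ₂ κ → cB K ℓ₁ ℓ₂ (κ+2) j = cB K ℓ₁ ℓ₂ κ (dB ℓ₁ ℓ₂ κ - j) := by
  intro κ j hj
  have h4 : κ % 4 = 0 ∨ κ % 4 = 1 ∨ κ % 4 = 2 ∨ κ % 4 = 3 := by omega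
  rcases h4 with h | h | h | h
  · have h2 : (κ+2) % 4 = 2 := by omega
    have hj' : j ≤ ℓ₁ := by simpa [dB, h] using hj
    simp only [cB, dB, h, h2]
    norm_num
    congr 1
    omega
  · have h2 : (κ+2) % 4 = 3 := by omega
    simp [cB, dB, h, h2]
  · have h2 : (κ+2) % 4 = 0 := by omega
    simp [cB, dB, h, h2]
  · have h2 : (κ+2) % 4 = 1 := by omega
    have hj' : j ≤ ℓ₂ := by simpa [dB, h] using hj
    simp only [cB, dB, h, h2]
    norm_num
    congr 1
    omega

lemma hddB : ∀ κ, dB ℓ₁ ℓ₂ (κ+2) = dB ℓ₁ ℓ₂ κ := by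
  intro κ
  have h4 : κ % 4 = 0 ∨ κ % 4 = 1 ∨ κ % 4 = 2 ∨ κ % 4 = 3 := by omega
  have h2 : (κ+2) % 4 = (κ % 4 + 2) % 4 := by omega
  rcases h4 with h | h | h | h <;> simp [dB, h, h2]

lemma hc0B (hℓ₁ : 1 ≤ ℓ₁) (hℓ₂ : 1 ≤ ℓ₂) : ∀ κ, cB K ℓ₁ ℓ₂ κ 0 = mB K ℓ₁ ℓ₂ κ := by
  intro κ
  have h4 : κ % 4 = 0 ∨ κ % 4 = 1 ∨ κ % 4 = 2 ∨ κ % 4 = 3 := by omega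
  rcases h4 with h | h | h | h <;> simp [cB, mB, h, pcB_zero]

lemma hmBmon (hℓ₁ : 1 ≤ ℓ₁) (hℓ₂ : 1 ≤ ℓ₂) : ∀ κ, mB K ℓ₁ ℓ₂ κ ∈ MonB K ℓ₁ ℓ₂ := by
  intro κ
  have h4 : κ % 4 = 0 ∨ κ % 4 = 1 ∨ κ % 4 = 2 ∨ κ % 4 = 3 := by omega
  rcases h4 with h | h | h | h
  · simp only [mB, h]
    norm_num
    rw [pcB_q1 hℓ₁]
    exact X_mem_monB (Or.inr (Or.inr (Or.inl rfl)))
  · simp only [mB, h]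
    norm_num
  · simp only [mB, h]
    norm_num
  · simp only [mB, h]
    norm_num
    rw [pcB_q2 hℓ₂]
    exact X_mem_monB (Or.inr (Or.inr (Or.inr rfl)))

end Inst


section Rel

variable {K : Type} [Field K] [CharZero K] {ℓ₁ ℓ₂ : ℕ}

lemma relF (hℓ₁ : 1 ≤ ℓ₁) (hℓ₂ : 1 ≤ ℓ₂) {x : ℤ → FF K} (hx : IsPreVarSeq K ℓ₁ ℓ₂ x)
    (κ : ℕ) (hκ : 1 ≤ κ) :
    x ((κ+1 : ℕ) : ℤ) * x ((κ-1 : ℕ) : ℤ) * φm K ℓ₁ ℓ₂ (mF K ℓ₁ ℓ₂ κ) =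
      ∑ j ∈ Finset.range (dF ℓ₁ ℓ₂ κ + 1), φm K ℓ₁ ℓ₂ (cF K ℓ₁ ℓ₂ κ j) * x (κ : ℤ) ^ j := by
  have hrel := hx.2.2 (κ : ℤ)
  have e1 : ((κ+1 : ℕ) : ℤ) = (κ : ℤ) + 1 := by push_cast; ring
  have e2 : ((κ-1 : ℕ) : ℤ) = (κ : ℤ) - 1 := by omega
  rw [e1, e2]
  have hzne : x (κ : ℤ) ≠ 0 := Pos.ne_zero (seq_mem_pos ⟨hx.1, hx.2⟩ _)
  have h4 : κ % 4 = 0 ∨ κ % 4 = 1 ∨ κ % 4 = 2 ∨ κ % 4 = 3 := by omega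
  rcases h4 with h | h | h | h
  · rw [show ((κ:ℤ)) % 4 = 0 from by omega] at hrel
    norm_num at hrel
    have hm' : mF K ℓ₁ ℓ₂ κ = pcB K ℓ₁ ℓ₂ 1 ℓ₂ := by simp [mF, h]
    have hd' : dF ℓ₁ ℓ₂ κ = ℓ₂ := by simp [dF, h]
    have hc' : ∀ j, cF K ℓ₁ ℓ₂ κ j = pcB K ℓ₁ ℓ₂ 1 (ℓ₂ - j) := fun j => by simp [cF, h]
    rw [hm', hd', φ_pcB hℓ₂ (by norm_num), hrel, P2bar, P2]
    rw [Finset.sum_congr rfl fun j (_ : j ∈ Finset.range (ℓ₂+1)) => by rw [hc' j]]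
    rw [sum_eq_Pbar 1 ℓ₂ (by norm_num) hℓ₂ _ hzne]
    ring
  · rw [show ((κ:ℤ)) % 4 = 1 from by omega] at hrel
    norm_num at hrel
    have hm' : mF K ℓ₁ ℓ₂ κ = 1 := by simp [mF, h]
    have hd' : dF ℓ₁ ℓ₂ κ = ℓ₁ := by simp [dF, h]
    have hc' : ∀ j, cF K ℓ₁ ℓ₂ κ j = pcB K ℓ₁ ℓ₂ 0 j := fun j => by simp [cF, h]
    rw [hm', map_one, mul_one, hd', hrel, P1]
    rw [Finset.sum_congr rfl fun j (_ : j ∈ Finset.range (ℓ₁+1)) => by rw [hc' j]]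
    rw [sum_eq_P 0 ℓ₁ (by norm_num) (x (κ:ℤ))]
  · rw [show ((κ:ℤ)) % 4 = 2 from by omega] at hrel
    norm_num at hrel
    have hm' : mF K ℓ₁ ℓ₂ κ = 1 := by simp [mF, h]
    have hd' : dF ℓ₁ ℓ₂ κ = ℓ₂ := by simp [dF, h]
    have hc' : ∀ j, cF K ℓ₁ ℓ₂ κ j = pcB K ℓ₁ ℓ₂ 1 j := fun j => by simp [cF, h]
    rw [hm', map_one, mul_one, hd', hrel, P2]
    rw [Finset.sum_congr rfl fun j (_ : j ∈ Finset.range (ℓ₂+1)) => by rw [hc' j]]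
    rw [sum_eq_P 1 ℓ₂ (by norm_num) (x (κ:ℤ))]
  · rw [show ((κ:ℤ)) % 4 = 3 from by omega] at hrel
    norm_num at hrel
    have hm' : mF K ℓ₁ ℓ₂ κ = pcB K ℓ₁ ℓ₂ 0 ℓ₁ := by simp [mF, h]
    have hd' : dF ℓ₁ ℓ₂ κ = ℓ₁ := by simp [dF, h]
    have hc' : ∀ j, cF K ℓ₁ ℓ₂ κ j = pcB K ℓ₁ ℓ₂ 0 (ℓ₁ - j) := fun j => by simp [cF, h]
    rw [hm', hd', φ_pcB hℓ₁ (by norm_num), hrel, P1bar, P1]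
    rw [Finset.sum_congr rfl fun j (_ : j ∈ Finset.range (ℓ₁+1)) => by rw [hc' j]]
    rw [sum_eq_Pbar 0 ℓ₁ (by norm_num) hℓ₁ _ hzne]
    ring

lemma relB (hℓ₁ : 1 ≤ ℓ₁) (hℓ₂ : 1 ≤ ℓ₂) {x : ℤ → FF K} (hx : IsPreVarSeq K ℓ₁ ℓ₂ x)
    (κ : ℕ) (hκ : 1 ≤ κ) :
    x (3 - ((κ+1 : ℕ) : ℤ)) * x (3 - ((κ-1 : ℕ) : ℤ)) * φm K ℓ₁ ℓ₂ (mB K ℓ₁ ℓ₂ κ) =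
      ∑ j ∈ Finset.range (dB ℓ₁ ℓ₂ κ + 1), φm K ℓ₁ ℓ₂ (cB K ℓ₁ ℓ₂ κ j) * x (3 - (κ : ℤ)) ^ j := by
  have hrel := hx.2.2 (3 - (κ : ℤ))
  have e1 : (3 - ((κ+1 : ℕ) : ℤ)) = (3 - (κ:ℤ)) - 1 := by push_cast; ring
  have e2 : (3 - ((κ-1 : ℕ) : ℤ)) = (3 - (κ:ℤ)) + 1 := by omega
  rw [e1, e2, mul_comm (x ((3 - (κ:ℤ)) - 1)) (x ((3 - (κ:ℤ)) + 1))]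
  have hzne : x (3 - (κ : ℤ)) ≠ 0 := Pos.ne_zero (seq_mem_pos ⟨hx.1, hx.2⟩ _)
  have h4 : κ % 4 = 0 ∨ κ % 4 = 1 ∨ κ % 4 = 2 ∨ κ % 4 = 3 := by omega
  rcases h4 with h | h | h | h
  · rw [show (3 - (κ:ℤ)) % 4 = 3 from by omega] at hrel
    norm_num at hrel
    have hm' : mB K ℓ₁ ℓ₂ κ = pcB K ℓ₁ ℓ₂ 0 ℓ₁ := by simp [mB, h]
    have hd' : dB ℓ₁ ℓ₂ κ = ℓ₁ := by simp [dB, h]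
    have hc' : ∀ j, cB K ℓ₁ ℓ₂ κ j = pcB K ℓ₁ ℓ₂ 0 (ℓ₁ - j) := fun j => by simp [cB, h]
    rw [hm', hd', φ_pcB hℓ₁ (by norm_num), hrel, P1bar, P1]
    rw [Finset.sum_congr rfl fun j (_ : j ∈ Finset.range (ℓ₁+1)) => by rw [hc' j]]
    rw [sum_eq_Pbar 0 ℓ₁ (by norm_num) hℓ₁ _ hzne]
    ring
  · rw [show (3 - (κ:ℤ)) % 4 = 2 from by omega] at hrel
    norm_num at hrel
    have hm' : mB K ℓ₁ ℓ₂ κ = 1 := by simp [mB, h]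
    have hd' : dB ℓ₁ ℓ₂ κ = ℓ₂ := by simp [dB, h]
    have hc' : ∀ j, cB K ℓ₁ ℓ₂ κ j = pcB K ℓ₁ ℓ₂ 1 j := fun j => by simp [cB, h]
    rw [hm', map_one, mul_one, hd', hrel, P2]
    rw [Finset.sum_congr rfl fun j (_ : j ∈ Finset.range (ℓ₂+1)) => by rw [hc' j]]
    rw [sum_eq_P 1 ℓ₂ (by norm_num) (x (3 - (κ:ℤ)))]
  · rw [show (3 - (κ:ℤ)) % 4 = 1 from by omega] at hrel
    norm_num at hrel
    have hm' : mB K ℓ₁ ℓ₂ κ = 1 := by simp [mB, h]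
    have hd' : dB ℓ₁ ℓ₂ κ = ℓ₁ := by simp [dB, h]
    have hc' : ∀ j, cB K ℓ₁ ℓ₂ κ j = pcB K ℓ₁ ℓ₂ 0 j := fun j => by simp [cB, h]
    rw [hm', map_one, mul_one, hd', hrel, P1]
    rw [Finset.sum_congr rfl fun j (_ : j ∈ Finset.range (ℓ₁+1)) => by rw [hc' j]]
    rw [sum_eq_P 0 ℓ₁ (by norm_num) (x (3 - (κ:ℤ)))]
  · rw [show (3 - (κ:ℤ)) % 4 = 0 from by omega] at hrel
    norm_num at hrel
    have hm' : mB K ℓ₁ ℓ₂ κ = pcB K ℓ₁ ℓ₂ 1 ℓ₂ := by simp [mB, h]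
    have hd' : dB ℓ₁ ℓ₂ κ = ℓ₂ := by simp [dB, h]
    have hc' : ∀ j, cB K ℓ₁ ℓ₂ κ j = pcB K ℓ₁ ℓ₂ 1 (ℓ₂ - j) := fun j => by simp [cB, h]
    rw [hm', hd', φ_pcB hℓ₂ (by norm_num), hrel, P2bar, P2]
    rw [Finset.sum_congr rfl fun j (_ : j ∈ Finset.range (ℓ₂+1)) => by rw [hc' j]]
    rw [sum_eq_Pbar 1 ℓ₂ (by norm_num) hℓ₂ _ hzne]
    ring

end Rel

end GCA
namespace GCA

/-- Each cluster pre-variable `x_k` (`k ∈ ℤ`) is a Laurent polynomial in `x₁` and `x₂` with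
coefficients in `k[p_{1,1},…,p_{1,ℓ₁},p_{1,ℓ₁}^{-1},p_{2,1},…,p_{2,ℓ₂},p_{2,ℓ₂}^{-1}]`. -/
theorem preVar_mem_laurentRing (K : Type) [Field K] [CharZero K] (ℓ₁ ℓ₂ : ℕ)
    (hℓ₁ : 1 ≤ ℓ₁) (hℓ₂ : 1 ≤ ℓ₂) (x : ℤ → FF K) (hx : IsPreVarSeq K ℓ₁ ℓ₂ x) :
    ∀ k : ℤ, x k ∈ LaurentRing K ℓ₁ ℓ₂ := by
  intro k
  have hpos := seq_mem_pos hx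
  have hmem : ∀ (n u v : BB K ℓ₁ ℓ₂), u ∈ MonB K ℓ₁ ℓ₂ → v ∈ MonB K ℓ₁ ℓ₂ →
      ∀ y : FF K, y = φm K ℓ₁ ℓ₂ n * φm K ℓ₁ ℓ₂ u * (φm K ℓ₁ ℓ₂ v)⁻¹ →
      y ∈ LaurentRing K ℓ₁ ℓ₂ := by
    intro n u v hu hv y hy
    rw [hy]
    exact mul_mem (mul_mem (φm_mem_laurent hℓ₁ hℓ₂ n) (φm_mem_laurent hℓ₁ hℓ₂ u))
      (monB_inv_mem_laurent hℓ₁ hℓ₂ hv)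
  by_cases hk : 1 ≤ k
  · have hall := goodW_all (c := cF K ℓ₁ ℓ₂) (dd := dF ℓ₁ ℓ₂) (m := mF K ℓ₁ ℓ₂)
      (x := fun n : ℕ => x (n : ℤ))
      (fun κ hκ => relF hℓ₁ hℓ₂ hx κ hκ)
      (fun κ => Pos.ne_zero (hpos _))
      hrecF hddF (hc0F hℓ₁ hℓ₂) (hmFmon hℓ₁ hℓ₂)
      (Or.inl rfl) (Or.inr (Or.inl rfl))
      (by rw [φm_X_val]; exact_mod_cast hx.1)
      (by rw [φm_X_val]; exact_mod_cast hx.2.1)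
      (by simp [mF]) (by simp [mF])
    obtain ⟨n, u, v, hu, hv, heq⟩ := hall k.toNat
    have e : ((k.toNat : ℕ) : ℤ) = k := by omega
    exact hmem n u v hu hv _ (by rw [← e]; exact heq)
  · have hall := goodW_all (c := cB K ℓ₁ ℓ₂) (dd := dB ℓ₁ ℓ₂) (m := mB K ℓ₁ ℓ₂)
      (x := fun n : ℕ => x (3 - (n : ℤ)))
      (fun κ hκ => relB hℓ₁ hℓ₂ hx κ hκ)
      (fun κ => Pos.ne_zero (hpos _))
      hrecB hddB (hc0B hℓ₁ hℓ₂) (hmBmon hℓ₁ hℓ₂)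
      (Or.inr (Or.inl rfl)) (Or.inl rfl)
      (by rw [φm_X_val]; norm_num; exact hx.2.1)
      (by rw [φm_X_val]; norm_num; exact hx.1)
      (by simp [mB]) (by simp [mB])
    obtain ⟨n, u, v, hu, hv, heq⟩ := hall (3 - k).toNat
    have e : (3 : ℤ) - (((3 - k).toNat : ℕ) : ℤ) = k := by omega
    exact hmem n u v hu hv _ (by rw [← e]; exact heq)

end GCA
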